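/- Let d ≥ 1 and let L = {L_i}_{i=1}^{d²} be a measure basis for d×d complex matrices with all weights l_i = tr L_i strictly positive. Set σ_i := L_i/l_i, and let λ^max_i and λ^min_i be the maximum and minimum eigenvalues of σ_i; assume λ^min_i < 1/d < λ^max_i for every i. Then for nonzero real t, every L^t_i := t·L_i + (1−t)·(l_i/d)·I is positive semidefinite (i.e. L^t is a MIC) if and only if max_i { 1/(1 − d·λ^max_i) } ≤ t ≤ min_i { 1/(1 − d·λ^min_i) }. -/

import Mathlib

open Matrix BigOperators
open scoped ComplexOrder Kronecker

/-- A measure basis: a linearly independent family of `d²` Hermitian `d×d` complex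
matrices summing to the identity, with nonnegative traces. -/
def IsMeasureBasis {d : ℕ} (L : Fin (d ^ 2) → Matrix (Fin d) (Fin d) ℂ) : Prop :=
  (∀ i, (L i).IsHermitian) ∧ LinearIndependent ℝ L ∧ (∑ i, L i) = 1 ∧ ∀ i, 0 ≤ ((L i).trace).re

/-- A Wigner basis: an orthogonal measure basis. -/
def IsWignerBasis {d : ℕ} (L : Fin (d ^ 2) → Matrix (Fin d) (Fin d) ℂ) : Prop :=
  IsMeasureBasis L ∧ ∀ i j, i ≠ j → (L i * L j).trace = 0

/-- The rescaled frame operator `S_L(X) = ∑ⱼ (tr(X Lⱼ)/lⱼ) Lⱼ`. -/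
noncomputable def rsFrameOp {n : Type*} [Fintype n] {m : Type*} [Fintype m] [DecidableEq m]
    (L : n → Matrix m m ℂ) (X : Matrix m m ℂ) : Matrix m m ℂ :=
  ∑ j, (((X * L j).trace) / ((L j).trace)) • L j

/-- A map on matrices that is ℝ-linear, Hermiticity-preserving, self-adjoint with respect to
the Hilbert–Schmidt inner product on Hermitian matrices, and positive. -/
def IsPosSelfAdjMap {m : Type*} [Fintype m]
    (T : Matrix m m ℂ → Matrix m m ℂ) : Prop :=
  IsLinearMap ℝ T ∧ (∀ X, X.IsHermitian → (T X).IsHermitian) ∧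
  (∀ X Y, X.IsHermitian → Y.IsHermitian → (T X * Y).trace = (X * T Y).trace) ∧
  (∀ X, X.IsHermitian → 0 ≤ ((X * T X).trace).re)

/-- `T` is the (unique) positive self-adjoint inverse square root of the rescaled frame
operator of `L`, i.e. `S_L ∘ T ∘ T = id` on Hermitian matrices; `PW(L) i = T (L i)`. -/
def IsInvSqrtOfFrameOp {n : Type*} [Fintype n] {m : Type*} [Fintype m] [DecidableEq m]
    (L : n → Matrix m m ℂ) (T : Matrix m m ℂ → Matrix m m ℂ) : Prop :=
  IsPosSelfAdjMap T ∧ ∀ X : Matrix m m ℂ, X.IsHermitian → rsFrameOp L (T (T X)) = X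

/-- with `σᵢ = Lᵢ/lᵢ` and `λᵢᵐᵃˣ, λᵢᵐⁱⁿ` its extreme eigenvalues
(assuming `λᵢᵐⁱⁿ < 1/d < λᵢᵐᵃˣ`), the collinear family `Lᵗ` is a MIC (all elements
positive semidefinite) iff `maxᵢ 1/(1 − dλᵢᵐᵃˣ) ≤ t ≤ minᵢ 1/(1 − dλᵢᵐⁱⁿ)`. -/

lemma psd_affine_iff {n : Type*} [Fintype n] [DecidableEq n]
    (A : Matrix n n ℂ) (hA : A.IsHermitian) (a c : ℝ) :
    (a • A + c • (1 : Matrix n n ℂ)).PosSemidef ↔ ∀ j, 0 ≤ a * hA.eigenvalues j + c := by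
  set U : Matrix n n ℂ := (hA.eigenvectorUnitary : Matrix n n ℂ) with hU
  have hU1 : U * star U = 1 := Matrix.mem_unitaryGroup_iff.mp hA.eigenvectorUnitary.2
  have hU2 : star U * U = 1 := Matrix.mem_unitaryGroup_iff'.mp hA.eigenvectorUnitary.2
  have hD : diagonal (fun j => ((a * hA.eigenvalues j + c : ℝ) : ℂ))
      = a • diagonal (RCLike.ofReal ∘ hA.eigenvalues) + c • (1 : Matrix n n ℂ) := by
    ext j k
    by_cases hjk : j = k
    · subst hjk
      simp [Matrix.diagonal_apply_eq, Complex.real_smul]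
    · simp [Matrix.diagonal_apply_ne _ hjk, Matrix.one_apply_ne hjk]
  have key : a • A + c • (1 : Matrix n n ℂ)
      = U * diagonal (fun j => ((a * hA.eigenvalues j + c : ℝ) : ℂ)) * star U := by
    conv_lhs => rw [hA.spectral_theorem]
    rw [Unitary.conjStarAlgAut_apply, ← hU, hD, Matrix.mul_add, Matrix.add_mul, Matrix.mul_smul, Matrix.smul_mul,
      Matrix.mul_smul, Matrix.smul_mul, Matrix.mul_one, hU1]
  constructor
  · intro h j
    rw [key] at h
    have h2 := h.mul_mul_conjTranspose_same (star U)
    rw [Matrix.star_eq_conjTranspose, conjTranspose_conjTranspose] at h2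
    have h3 : Uᴴ * (U * diagonal (fun j => ((a * hA.eigenvalues j + c : ℝ) : ℂ)) * Uᴴ) * U
        = diagonal (fun j => ((a * hA.eigenvalues j + c : ℝ) : ℂ)) := by
      simp only [← Matrix.star_eq_conjTranspose]
      rw [← Matrix.mul_assoc, ← Matrix.mul_assoc, hU2, Matrix.one_mul, Matrix.mul_assoc, hU2,
        Matrix.mul_one]
    rw [h3] at h2
    have := posSemidef_diagonal_iff.mp h2 j
    exact_mod_cast this
  · intro h
    rw [key]
    have hdiag : (diagonal (fun j => ((a * hA.eigenvalues j + c : ℝ) : ℂ))).PosSemidef :=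
      posSemidef_diagonal_iff.mpr fun j => by exact_mod_cast h j
    simpa [Matrix.star_eq_conjTranspose] using hdiag.mul_mul_conjTranspose_same U

theorem collinear_mic_interval {d : ℕ} [NeZero d]
    (L : Fin (d ^ 2) → Matrix (Fin d) (Fin d) ℂ)
    (hL : IsMeasureBasis L) (hpos : ∀ i, 0 < ((L i).trace).re)
    (σ : Fin (d ^ 2) → Matrix (Fin d) (Fin d) ℂ)
    (hσdef : ∀ i, σ i = ((((L i).trace).re)⁻¹ : ℝ) • L i)
    (hσ : ∀ i, (σ i).IsHermitian)
    (lamMax lamMin : Fin (d ^ 2) → ℝ)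
    (hlamMax : ∀ i, lamMax i = Finset.univ.sup' Finset.univ_nonempty ((hσ i).eigenvalues))
    (hlamMin : ∀ i, lamMin i = Finset.univ.inf' Finset.univ_nonempty ((hσ i).eigenvalues))
    (hgap : ∀ i, lamMin i < (d : ℝ)⁻¹ ∧ (d : ℝ)⁻¹ < lamMax i)
    (t : ℝ) (ht : t ≠ 0)
    (Lt : Fin (d ^ 2) → Matrix (Fin d) (Fin d) ℂ)
    (hLt : ∀ i, Lt i = t • L i +
      (((1 - t) * ((L i).trace).re / (d : ℝ)) • (1 : Matrix (Fin d) (Fin d) ℂ))) :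
    (∀ i, (Lt i).PosSemidef) ↔
      (Finset.univ.sup' Finset.univ_nonempty (fun i => (1 - (d : ℝ) * lamMax i)⁻¹) ≤ t ∧
       t ≤ Finset.univ.inf' Finset.univ_nonempty (fun i => (1 - (d : ℝ) * lamMin i)⁻¹)) := by
  
  have hd : (0:ℝ) < d := Nat.cast_pos.mpr (Nat.pos_of_ne_zero (NeZero.ne d))
  have key : ∀ i, (Lt i).PosSemidef ↔
      ((1 - (d:ℝ) * lamMax i)⁻¹ ≤ t ∧ t ≤ (1 - (d:ℝ) * lamMin i)⁻¹) := by
    intro i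
    set l : ℝ := ((L i).trace).re with hldef
    have hl : 0 < l := hpos i
    have hLi : L i = l • σ i := by
      rw [hσdef i, smul_smul, mul_inv_cancel₀ hl.ne', one_smul]
    have hLt' : Lt i = (t * l) • σ i + ((1 - t) * l / (d:ℝ)) • (1 : Matrix (Fin d) (Fin d) ℂ) := by
      rw [hLt i, ← hldef, hLi, smul_smul]
    have step1 : (Lt i).PosSemidef ↔
        ∀ j, 0 ≤ (t * l) * (hσ i).eigenvalues j + (1 - t) * l / (d:ℝ) := by
      rw [hLt']
      exact psd_affine_iff (σ i) (hσ i) (t * l) ((1 - t) * l / (d:ℝ))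
    have step2 : ∀ lam : ℝ, (0 ≤ (t * l) * lam + (1 - t) * l / (d:ℝ)) ↔ t * (1 - (d:ℝ) * lam) ≤ 1 := by
      intro lam
      have e : (t * l) * lam + (1 - t) * l / (d:ℝ)
          = (l / (d:ℝ)) * ((d:ℝ) * (t * lam) + (1 - t)) := by
        field_simp
      rw [e, mul_nonneg_iff_of_pos_left (div_pos hl hd)]
      constructor <;> intro h <;> nlinarith [h]
    have hMx : ∀ j, (hσ i).eigenvalues j ≤ lamMax i := by
      intro j
      rw [hlamMax i]
      exact Finset.le_sup' _ (Finset.mem_univ j)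
    have hmn : ∀ j, lamMin i ≤ (hσ i).eigenvalues j := by
      intro j
      rw [hlamMin i]
      exact Finset.inf'_le _ (Finset.mem_univ j)
    have hMxmem : ∃ j, (hσ i).eigenvalues j = lamMax i := by
      obtain ⟨j, -, hj⟩ := Finset.exists_mem_eq_sup' (Finset.univ_nonempty) ((hσ i).eigenvalues)
      exact ⟨j, by rw [hlamMax i, hj]⟩
    have hmnmem : ∃ j, (hσ i).eigenvalues j = lamMin i := by
      obtain ⟨j, -, hj⟩ := Finset.exists_mem_eq_inf' (Finset.univ_nonempty) ((hσ i).eigenvalues)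
      exact ⟨j, by rw [hlamMin i, hj]⟩
    have step3 : (∀ j, t * (1 - (d:ℝ) * (hσ i).eigenvalues j) ≤ 1) ↔
        (t * (1 - (d:ℝ) * lamMax i) ≤ 1 ∧ t * (1 - (d:ℝ) * lamMin i) ≤ 1) := by
      constructor
      · intro h
        obtain ⟨j1, hj1⟩ := hMxmem
        obtain ⟨j2, hj2⟩ := hmnmem
        exact ⟨hj1 ▸ h j1, hj2 ▸ h j2⟩
      · rintro ⟨h1, h2⟩ j
        rcases le_or_gt 0 t with ht0 | ht0
        · calc t * (1 - (d:ℝ) * (hσ i).eigenvalues j) ≤ t * (1 - (d:ℝ) * lamMin i) := by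
                nlinarith [mul_nonneg (mul_nonneg ht0 hd.le) (sub_nonneg.mpr (hmn j))]
            _ ≤ 1 := h2
        · calc t * (1 - (d:ℝ) * (hσ i).eigenvalues j) ≤ t * (1 - (d:ℝ) * lamMax i) := by
                nlinarith [mul_nonneg (mul_nonneg (neg_nonneg.mpr ht0.le) hd.le) (sub_nonneg.mpr (hMx j))]
            _ ≤ 1 := h1
    have hMneg : 1 - (d:ℝ) * lamMax i < 0 := by
      have h1 : (d:ℝ) * (d:ℝ)⁻¹ < (d:ℝ) * lamMax i := mul_lt_mul_of_pos_left (hgap i).2 hd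
      rw [mul_inv_cancel₀ hd.ne'] at h1
      linarith
    have hmpos : 0 < 1 - (d:ℝ) * lamMin i := by
      have h1 : (d:ℝ) * lamMin i < (d:ℝ) * (d:ℝ)⁻¹ := mul_lt_mul_of_pos_left (hgap i).1 hd
      rw [mul_inv_cancel₀ hd.ne'] at h1
      linarith
    rw [step1]
    simp only [step2]
    rw [step3]
    constructor
    · rintro ⟨h1, h2⟩
      refine ⟨?_, ?_⟩
      · rw [← one_div, div_le_iff_of_neg hMneg]
        exact h1
      · rw [← one_div, le_div_iff₀ hmpos]
        exact h2
    · rintro ⟨h1, h2⟩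
      rw [← one_div, div_le_iff_of_neg hMneg] at h1
      rw [← one_div, le_div_iff₀ hmpos] at h2
      exact ⟨h1, h2⟩
  constructor
  · intro h
    exact ⟨Finset.sup'_le _ _ (fun i _ => ((key i).mp (h i)).1),
      Finset.le_inf' _ _ (fun i _ => ((key i).mp (h i)).2)⟩
  · rintro ⟨h1, h2⟩ i
    exact (key i).mpr ⟨le_trans (Finset.le_sup' (fun i => (1 - (d:ℝ) * lamMax i)⁻¹) (Finset.mem_univ i)) h1,
      le_trans h2 (Finset.inf'_le (fun i => (1 - (d:ℝ) * lamMin i)⁻¹) (Finset.mem_univ i))⟩
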